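/- Let G be a finite group with identity e and μ a fuzzy subgroup of G. Then the fuzzy order of μ (the least positive integer m such that μ(xᵐ) = μ(e) for all x ∈ G) equals the least common multiple over all x ∈ G of the fuzzy orders FO_μ(x) (where FO_μ(x) is the least positive integer m such that μ(xᵐ) = μ(e)). -/

import Mathlib

/-- A fuzzy subgroup of a group `G`: a function `μ : G → ℝ` valued in `[0,1]`
with `μ (x*y) ≥ min (μ x) (μ y)` and `μ x⁻¹ ≥ μ x`. -/
def IsFuzzySubgroup {G : Type*} [Group G] (μ : G → ℝ) : Prop :=
  (∀ x : G, 0 ≤ μ x ∧ μ x ≤ 1) ∧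
  (∀ x y : G, μ (x * y) ≥ min (μ x) (μ y)) ∧
  (∀ x : G, μ x⁻¹ ≥ μ x)

theorem stmt_11 {G : Type*} [Group G] [Fintype G] (μ : G → ℝ)
    (hμ : IsFuzzySubgroup μ) :
    ∃ f : G → ℕ,
      (∀ x : G, IsLeast {m : ℕ | 0 < m ∧ μ (x ^ m) = μ 1} (f x)) ∧
      IsLeast {m : ℕ | 0 < m ∧ ∀ x : G, μ (x ^ m) = μ 1}
        (Finset.univ.lcm f) := by
  classical
  obtain ⟨-, hmul, hinv⟩ := hμ
  -- μ x ≤ μ 1 for all x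
  have hle : ∀ x : G, μ x ≤ μ 1 := by
    intro x
    have h1 : μ 1 ≥ min (μ x) (μ x⁻¹) := by
      have := hmul x x⁻¹; rwa [mul_inv_cancel] at this
    have h2 : min (μ x) (μ x⁻¹) = μ x := min_eq_left (hinv x)
    rw [h2] at h1; exact h1
  have hmul' : ∀ a b : G, μ a = μ 1 → μ b = μ 1 → μ (a * b) = μ 1 := by
    intro a b ha hb
    refine le_antisymm (hle _) ?_
    have := hmul a b
    rw [ha, hb, min_self] at this
    exact this
  have hinv' : ∀ a : G, μ a = μ 1 → μ a⁻¹ = μ 1 := by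
    intro a ha
    refine le_antisymm (hle _) ?_
    have := hinv a; rw [ha] at this; exact this
  have hone : μ (1 : G) = μ 1 := rfl
  have hpow : ∀ a : G, μ a = μ 1 → ∀ n : ℕ, μ (a ^ n) = μ 1 := by
    intro a ha n
    induction n with
    | zero => simpa using hone
    | succ n ih => rw [pow_succ]; exact hmul' _ _ ih ha
  -- existence of positive m with μ (x^m) = μ 1
  have hex : ∀ x : G, ∃ m : ℕ, 0 < m ∧ μ (x ^ m) = μ 1 :=
    fun x => ⟨orderOf x, orderOf_pos x, by rw [pow_orderOf_eq_one]⟩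
  set f : G → ℕ := fun x => Nat.find (hex x) with hf
  have hfspec : ∀ x : G, 0 < f x ∧ μ (x ^ f x) = μ 1 := fun x => Nat.find_spec (hex x)
  have hfleast : ∀ x : G, IsLeast {m : ℕ | 0 < m ∧ μ (x ^ m) = μ 1} (f x) :=
    fun x => ⟨hfspec x, fun m hm => Nat.find_le hm⟩
  -- f x divides any m in the set
  have hdvd : ∀ x : G, ∀ m : ℕ, μ (x ^ m) = μ 1 → f x ∣ m := by
    intro x m hm
    have hk := hfspec x
    set k := f x with hk'
    have hr : μ (x ^ (m % k)) = μ 1 := by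
      have hdecomp : x ^ m = (x ^ k) ^ (m / k) * x ^ (m % k) := by
        rw [← pow_mul, ← pow_add, Nat.div_add_mod]
      have : x ^ (m % k) = ((x ^ k) ^ (m / k))⁻¹ * x ^ m := by
        rw [hdecomp, inv_mul_cancel_left]
      rw [this]
      exact hmul' _ _ (hinv' _ (hpow _ hk.2 _)) hm
    by_contra hnd
    have hrpos : 0 < m % k := by
      rcases Nat.eq_zero_or_pos (m % k) with h0 | h
      · exact absurd ((Nat.dvd_iff_mod_eq_zero.mpr h0)) hnd
      · exact h
    have := (hfleast x).2 ⟨hrpos, hr⟩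
    have hlt : m % k < k := Nat.mod_lt _ hk.1
    omega
  refine ⟨f, hfleast, ?_, ?_⟩
  · constructor
    · rw [Nat.pos_iff_ne_zero]
      intro h0
      rw [Finset.lcm_eq_zero_iff] at h0
      obtain ⟨x, -, hx⟩ := (Set.mem_image _ _ _).mp h0
      exact (hfspec x).1.ne' hx
    · intro x
      have hd : f x ∣ Finset.univ.lcm f := Finset.dvd_lcm (Finset.mem_univ x)
      obtain ⟨q, hq⟩ := hd
      rw [hq, pow_mul]
      exact hpow _ (hfspec x).2 _
  · rintro m ⟨hmpos, hm⟩
    have : Finset.univ.lcm f ∣ m := Finset.lcm_dvd fun x _ => hdvd x m (hm x)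
    exact Nat.le_of_dvd hmpos this
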